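/- Let J be a strongly stable monomial ideal, A and B commutative noetherian rings, and φ: A → B a ring homomorphism. If F_J = { f_α = x^α − Σ c_{αβ} x^β : x^α ∈ B_J } is a J-marked basis in A[x₀,…,xₙ], then the set F'_J = { x^α − Σ φ(c_{αβ}) x^β : x^α ∈ B_J } obtained by applying φ to the coefficients is a J-marked basis in B[x₀,…,xₙ], and the ideal it generates is the extension of (F_J) along the induced map A[x] → B[x]. -/

import Mathlib

open MvPolynomial

noncomputable section

/-- Exponent vectors of monomials in the variables `x₀, …, xₙ`. -/
abbrev Mon (n : ℕ) : Type := Fin (n + 1) →₀ ℕ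

namespace MarkedFamilies

variable {n : ℕ}

/-- The total degree of a monomial given by its exponent vector. -/
def mdeg (α : Mon n) : ℕ := α.sum fun _ e => e

/-- A monomial ideal, identified with its (upward closed) set of monomials. -/
def IsMonomialIdeal (J : Set (Mon n)) : Prop := ∀ α ∈ J, ∀ δ : Mon n, α + δ ∈ J

/-- A strongly stable monomial ideal: a monomial ideal such that for every monomial
`x^α ∈ J`, every variable `x_j` dividing `x^α` and every `i > j`, `(x_i/x_j)·x^α ∈ J`. -/
def IsStronglyStable (J : Set (Mon n)) : Prop :=
  IsMonomialIdeal J ∧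
    ∀ α ∈ J, ∀ j : Fin (n + 1), α j ≠ 0 → ∀ i : Fin (n + 1), j < i →
      α - Finsupp.single j 1 + Finsupp.single i 1 ∈ J

/-- The minimal monomial generators `B_J` of a monomial ideal `J`. -/
def minGens (J : Set (Mon n)) : Set (Mon n) :=
  {α | α ∈ J ∧ ∀ j : Fin (n + 1), α j ≠ 0 → α - Finsupp.single j 1 ∉ J}

/-- `min x^γ ≥ max x^δ`: every variable dividing `x^γ` is at least every variable
dividing `x^δ` (vacuously true when either monomial is `1`). -/
def minGeMax (γ δ : Mon n) : Prop := ∀ i ∈ γ.support, ∀ j ∈ δ.support, j ≤ i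

/-- Lexicographic order induced by `x₀ < ⋯ < xₙ`: `a <ₗₑₓ b` iff at the largest
index where they differ, `a` has the smaller exponent. -/
def lexLt (a b : Mon n) : Prop :=
  ∃ i : Fin (n + 1), a i < b i ∧ ∀ j : Fin (n + 1), i < j → a j = b j

/-- A saturated strongly stable ideal: strongly stable and no minimal generator is
divisible by `x₀`. -/
def IsSaturatedSS (J : Set (Mon n)) : Prop :=
  IsStronglyStable J ∧ ∀ α ∈ minGens J, α 0 = 0

/-- The truncation `J_{≥ t}`: the (monomial) ideal generated by the monomials of `J`
of degree at least `t`. -/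
def truncSet (J : Set (Mon n)) (t : ℕ) : Set (Mon n) := {α | α ∈ J ∧ t ≤ mdeg α}

section Ring

variable (A : Type*) [CommRing A]

/-- `⟨N(J)⟩`: the `A`-span of the monomials not in `J`. -/
def nSpan (J : Set (Mon n)) : Submodule A (MvPolynomial (Fin (n + 1)) A) :=
  Submodule.span A {p | ∃ β : Mon n, β ∉ J ∧ p = monomial β (1 : A)}

/-- `⟨N(J)_s⟩`: the `A`-span of the monomials of degree `s` not in `J`. -/
def nSpanDeg (J : Set (Mon n)) (s : ℕ) : Submodule A (MvPolynomial (Fin (n + 1)) A) :=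
  Submodule.span A {p | ∃ β : Mon n, β ∉ J ∧ mdeg β = s ∧ p = monomial β (1 : A)}

/-- `I_s`: the degree-`s` homogeneous component of an ideal, as an `A`-submodule. -/
def idealDeg (I : Ideal (MvPolynomial (Fin (n + 1)) A)) (s : ℕ) :
    Submodule A (MvPolynomial (Fin (n + 1)) A) :=
  Submodule.restrictScalars A I ⊓ homogeneousSubmodule (Fin (n + 1)) A s

/-- `I_{≥ s}`: the ideal `⊕_{t ≥ s} I_t`, i.e. the ideal generated by the homogeneous
elements of `I` of degree at least `s`. -/
def idealGeq (I : Ideal (MvPolynomial (Fin (n + 1)) A)) (s : ℕ) :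
    Ideal (MvPolynomial (Fin (n + 1)) A) :=
  Ideal.span {f | f ∈ I ∧ ∃ t : ℕ, s ≤ t ∧ f.IsHomogeneous t}

/-- A homogeneous ideal of the polynomial ring. -/
def IsHomogIdeal (I : Ideal (MvPolynomial (Fin (n + 1)) A)) : Prop :=
  ∀ f ∈ I, ∀ s : ℕ, homogeneousComponent s f ∈ I

variable {A}

/-- A `J`-marked set: a family assigning to each minimal generator `x^α ∈ B_J` a
polynomial `f_α = x^α − Σ_{x^β ∈ N(J)_{|α|}} c_{αβ} x^β`. -/
def IsMarkedSet (J : Set (Mon n)) (F : Mon n → MvPolynomial (Fin (n + 1)) A) : Prop :=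
  ∀ α ∈ minGens J, (F α).coeff α = 1 ∧
    ∀ β ∈ (F α).support, β ≠ α → β ∉ J ∧ mdeg β = mdeg α

/-- The ideal generated by a marked set. -/
def markedIdeal (J : Set (Mon n)) (F : Mon n → MvPolynomial (Fin (n + 1)) A) :
    Ideal (MvPolynomial (Fin (n + 1)) A) :=
  Ideal.span (F '' minGens J)

/-- A `J`-marked basis: a `J`-marked set `F` with `A[x] = (F) ⊕ ⟨N(J)⟩` as `A`-modules. -/
def IsMarkedBasis (J : Set (Mon n)) (F : Mon n → MvPolynomial (Fin (n + 1)) A) : Prop :=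
  IsMarkedSet J F ∧
    IsCompl (Submodule.restrictScalars A (markedIdeal J F)) (nSpan A J)

/-- `F_J^{(s)} = { x^δ f_α : deg(x^δ f_α) = s, min x^α ≥ max x^δ }`. -/
def FSet (J : Set (Mon n)) (F : Mon n → MvPolynomial (Fin (n + 1)) A) (s : ℕ) :
    Set (MvPolynomial (Fin (n + 1)) A) :=
  {p | ∃ α δ : Mon n, α ∈ minGens J ∧ mdeg α + mdeg δ = s ∧ minGeMax α δ ∧
        p = monomial δ (1 : A) * F α}

/-- `F̂_J^{(s)} = { x^δ f_α : deg(x^δ f_α) = s, min x^α < max x^δ }`. -/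
def FHatSet (J : Set (Mon n)) (F : Mon n → MvPolynomial (Fin (n + 1)) A) (s : ℕ) :
    Set (MvPolynomial (Fin (n + 1)) A) :=
  {p | ∃ α δ : Mon n, α ∈ minGens J ∧ mdeg α + mdeg δ = s ∧ ¬ minGeMax α δ ∧
        p = monomial δ (1 : A) * F α}

/-- `SF_J^{(s)} = { x^δ f_β − x^γ f_α : x^δ f_β ∈ F̂_J^{(s)}, x^γ f_α ∈ F_J^{(s)},
x^δ x^β = x^γ x^α }`. -/
def SFSet (J : Set (Mon n)) (F : Mon n → MvPolynomial (Fin (n + 1)) A) (s : ℕ) :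
    Set (MvPolynomial (Fin (n + 1)) A) :=
  {p | ∃ α γ β δ : Mon n, α ∈ minGens J ∧ β ∈ minGens J ∧
      mdeg β + mdeg δ = s ∧ ¬ minGeMax β δ ∧
      mdeg α + mdeg γ = s ∧ minGeMax α γ ∧
      δ + β = γ + α ∧ p = monomial δ (1 : A) * F β - monomial γ (1 : A) * F α}

/-- A `(J_s)`-marked set: one marked polynomial `f̃_γ = x^γ − Σ_{x^δ ∈ N(J)_s} d_{γδ} x^δ`
for each monomial `x^γ` of degree `s` in `J`. -/
def IsTruncMarkedSet (J : Set (Mon n)) (s : ℕ)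
    (f : Mon n → MvPolynomial (Fin (n + 1)) A) : Prop :=
  ∀ γ : Mon n, γ ∈ J → mdeg γ = s →
    (f γ).coeff γ = 1 ∧ ∀ β ∈ (f γ).support, β ≠ γ → β ∉ J ∧ mdeg β = s

end Ring

/-- Index set for the generic coefficients `C_{αβ}` (`x^α ∈ B_J`, `x^β ∈ N(J)_{|α|}`). -/
abbrev CIdx (J : Set (Mon n)) : Type :=
  {p : Mon n × Mon n // p.1 ∈ minGens J ∧ p.2 ∉ J ∧ mdeg p.2 = mdeg p.1}

/-- The coefficient ring `ℤ[C]`. -/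
abbrev ZC (J : Set (Mon n)) : Type := MvPolynomial (CIdx J) ℤ

/-- The generic `J`-marked set `𝓕_J = { x^α − Σ_{x^β ∈ N(J)_{|α|}} C_{αβ} x^β }`
in `ℤ[C][x]`, characterized through its coefficients. -/
def IsGenericMarkedSet (J : Set (Mon n))
    (𝓕 : Mon n → MvPolynomial (Fin (n + 1)) (ZC J)) : Prop :=
  ∀ α : Mon n, ∀ hα : α ∈ minGens J,
    (𝓕 α).coeff α = 1 ∧
    (∀ γ : Mon n, ∀ hγ : γ ∉ J ∧ mdeg γ = mdeg α,
      (𝓕 α).coeff γ = - MvPolynomial.X ⟨(α, γ), hα, hγ.1, hγ.2⟩) ∧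
    (∀ γ : Mon n, γ ≠ α → ¬(γ ∉ J ∧ mdeg γ = mdeg α) → (𝓕 α).coeff γ = 0)

/-- The ideal `𝔦_J ⊆ ℤ[C]` generated by the `x`-coefficients of all polynomials
in `(𝓕_J) ∩ ⟨N(J)⟩`. -/
def markedCoeffIdeal (J : Set (Mon n))
    (𝓕 : Mon n → MvPolynomial (Fin (n + 1)) (ZC J)) : Ideal (ZC J) :=
  Ideal.span {c : ZC J | ∃ p : MvPolynomial (Fin (n + 1)) (ZC J),
    p ∈ markedIdeal J 𝓕 ∧ p ∈ nSpan (ZC J) J ∧ ∃ γ : Mon n, p.coeff γ = c}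

/-- The evaluation homomorphism `φ_{F_J} : ℤ[C] → A`, `C_{αβ} ↦ c_{αβ}`, associated to a
`J`-marked set `F` with `f_α = x^α − Σ c_{αβ} x^β` (so `c_{αβ} = −(F α).coeff β`). -/
noncomputable def evalHom (J : Set (Mon n)) {A : Type*} [CommRing A]
    (F : Mon n → MvPolynomial (Fin (n + 1)) A) : ZC J →+* A :=
  MvPolynomial.eval₂Hom (Int.castRingHom A) fun p => -((F p.val.1).coeff p.val.2)

/-- `x^γ` is the `σ`-leading monomial of `g` (with nonzero leading coefficient). -/
def IsLeadingMon {A : Type*} [CommRing A] (σlt : Mon n → Mon n → Prop)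
    (g : MvPolynomial (Fin (n + 1)) A) (γ : Mon n) : Prop :=
  g.coeff γ ≠ 0 ∧ ∀ δ ∈ g.support, δ ≠ γ → σlt δ γ

/-- `LC(I, x^γ)`: the set of leading coefficients at `x^γ` of elements of `I`,
together with `0`. -/
def LCset {A : Type*} [CommRing A] (σlt : Mon n → Mon n → Prop)
    (I : Ideal (MvPolynomial (Fin (n + 1)) A)) (γ : Mon n) : Set A :=
  {a | ∃ g ∈ I, IsLeadingMon σlt g γ ∧ g.coeff γ = a} ∪ {0}

/-- A monic ideal with respect to the term ordering `σ`. -/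
def IsMonicIdeal {A : Type*} [CommRing A] (σlt : Mon n → Mon n → Prop)
    (I : Ideal (MvPolynomial (Fin (n + 1)) A)) : Prop :=
  ∀ γ : Mon n, LCset σlt I γ = {0} ∨ LCset σlt I γ = Set.univ

/-- The set of `σ`-leading monomials of elements of `I` (i.e. `in_σ(I)`,
identified with its set of monomials). -/
def leadingMons {A : Type*} [CommRing A] (σlt : Mon n → Mon n → Prop)
    (I : Ideal (MvPolynomial (Fin (n + 1)) A)) : Set (Mon n) :=
  {γ | ∃ g ∈ I, IsLeadingMon σlt g γ}

end MarkedFamilies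
end

noncomputable section Aux11
open MarkedFamilies

variable {n : ℕ} {A B : Type*} [CommRing A] [CommRing B] (φ : A →+* B)

lemma aux11_map_mem_nSpan {J : Set (Mon n)} {p : MvPolynomial (Fin (n + 1)) A}
    (hp : p ∈ nSpan A J) : MvPolynomial.map φ p ∈ nSpan B J := by
  refine Submodule.span_induction (fun x hx => ?_) (by simp) (fun x y _ _ hx hy => ?_)
    (fun a x _ hx => ?_) hp
  · obtain ⟨β, hβ, rfl⟩ := hx
    rw [MvPolynomial.map_monomial]
    exact Submodule.subset_span ⟨β, hβ, by simp⟩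
  · rw [map_add]; exact add_mem hx hy
  · rw [MvPolynomial.smul_eq_C_mul, map_mul, MvPolynomial.map_C, ← MvPolynomial.smul_eq_C_mul]
    exact Submodule.smul_mem _ _ hx

lemma aux11_markedIdeal_map (J : Set (Mon n)) (F : Mon n → MvPolynomial (Fin (n + 1)) A) :
    markedIdeal J (fun α => MvPolynomial.map φ (F α))
      = Ideal.map (MvPolynomial.map φ) (markedIdeal J F) := by
  rw [markedIdeal, markedIdeal, Ideal.map_span, Set.image_image]

lemma aux11_mem_span_image {J : Set (Mon n)} {F : Mon n → MvPolynomial (Fin (n + 1)) A}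
    {q : MvPolynomial (Fin (n + 1)) B}
    (hq : q ∈ markedIdeal J (fun α => MvPolynomial.map φ (F α))) :
    q ∈ Submodule.span B
      (MvPolynomial.map φ '' ((markedIdeal J F : Set (MvPolynomial (Fin (n + 1)) A)))) := by
  set M : Submodule B (MvPolynomial (Fin (n + 1)) B) :=
    Submodule.span B
      (MvPolynomial.map φ '' ((markedIdeal J F : Set (MvPolynomial (Fin (n + 1)) A)))) with hM
  -- multiplying a generator by any polynomial stays in M
  have hgen : ∀ g ∈ markedIdeal J F, ∀ p : MvPolynomial (Fin (n + 1)) B,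
      p * MvPolynomial.map φ g ∈ M := by
    intro g hg p
    induction p using MvPolynomial.induction_on' with
    | monomial δ b =>
      have h1 : (MvPolynomial.monomial δ b : MvPolynomial (Fin (n + 1)) B)
          = b • MvPolynomial.monomial δ 1 := by
        rw [MvPolynomial.smul_monomial, smul_eq_mul, mul_one]
      have h2 : (MvPolynomial.monomial δ (1 : B)) * MvPolynomial.map φ g
          = MvPolynomial.map φ (MvPolynomial.monomial δ 1 * g) := by
        simp [MvPolynomial.map_monomial]
      rw [h1, smul_mul_assoc, h2]
      exact Submodule.smul_mem _ _ (Submodule.subset_span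
        ⟨_, Ideal.mul_mem_left _ _ hg, rfl⟩)
    | add p q hp hq => rw [add_mul]; exact add_mem hp hq
  have hmul : ∀ p : MvPolynomial (Fin (n + 1)) B, ∀ m ∈ M, p * m ∈ M := by
    intro p m hm
    refine Submodule.span_induction (fun x hx => ?_) (by simp) (fun x y _ _ hx hy => ?_)
      (fun b x _ hx => ?_) hm
    · obtain ⟨g, hg, rfl⟩ := hx
      exact hgen g hg p
    · rw [mul_add]; exact add_mem hx hy
    · rw [mul_smul_comm]; exact Submodule.smul_mem _ _ hx
  rw [aux11_markedIdeal_map φ J F] at hq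
  -- q ∈ Ideal.span (map φ '' I); induct
  have hq' : q ∈ Ideal.span
      (⇑(MvPolynomial.map φ) '' ((markedIdeal J F : Set (MvPolynomial (Fin (n + 1)) A)))) := hq
  refine Submodule.span_induction (fun x hx => ?_) (by simp) (fun x y _ _ hx hy => ?_)
    (fun p x _ hx => ?_) hq'
  · obtain ⟨g, hg, rfl⟩ := hx
    exact Submodule.subset_span ⟨g, hg, rfl⟩
  · exact add_mem hx hy
  · rw [smul_eq_mul]; exact hmul p x hx

end Aux11

open MarkedFamilies in
/-- base change of a `J`-marked basis along a ring homomorphism is a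
`J`-marked basis, and generates the extended ideal. -/
theorem stmt_11 {n : ℕ} {A B : Type*} [CommRing A] [IsNoetherianRing A]
    [CommRing B] [IsNoetherianRing B] (φ : A →+* B)
    (J : Set (Mon n)) (hJ : IsStronglyStable J)
    (F : Mon n → MvPolynomial (Fin (n + 1)) A) (hF : IsMarkedBasis J F) :
    IsMarkedBasis J (fun α => MvPolynomial.map φ (F α)) ∧
    markedIdeal J (fun α => MvPolynomial.map φ (F α))
      = Ideal.map (MvPolynomial.map φ) (markedIdeal J F) := by
  classical
  obtain ⟨hFset, hcompl⟩ := hF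
  set IA := Submodule.restrictScalars A (markedIdeal J F) with hIA
  set NA := nSpan A J with hNA
  -- projection of A[x] onto NA along IA
  set πA : MvPolynomial (Fin (n + 1)) A →ₗ[A] MvPolynomial (Fin (n + 1)) A :=
    NA.subtype ∘ₗ Submodule.projectionOnto NA IA hcompl.symm with hπA
  have hπA_I : ∀ p ∈ IA, πA p = 0 := by
    intro p hp
    have := Submodule.linearProjOfIsCompl_apply_right hcompl.symm ⟨p, hp⟩
    simp [hπA, this]
  have hπA_N : ∀ p ∈ NA, πA p = p := by
    intro p hp
    have := Submodule.linearProjOfIsCompl_apply_left hcompl.symm ⟨p, hp⟩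
    simp [hπA, this]
  -- the induced B-linear projection
  set bB := MvPolynomial.basisMonomials (Fin (n + 1)) B with hbB
  set πB : MvPolynomial (Fin (n + 1)) B →ₗ[B] MvPolynomial (Fin (n + 1)) B :=
    bB.constr B (fun γ => MvPolynomial.map φ (πA (MvPolynomial.monomial γ 1))) with hπB
  have hπB_mon : ∀ γ : Mon n, πB (MvPolynomial.monomial γ 1)
      = MvPolynomial.map φ (πA (MvPolynomial.monomial γ 1)) := by
    intro γ
    have h1 : (MvPolynomial.monomial γ (1 : B)) = bB γ := by
      rw [hbB, MvPolynomial.coe_basisMonomials]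
    rw [hπB, h1, Module.Basis.constr_basis]
  have hcomm : ∀ p : MvPolynomial (Fin (n + 1)) A,
      πB (MvPolynomial.map φ p) = MvPolynomial.map φ (πA p) := by
    intro p
    induction p using MvPolynomial.induction_on' with
    | monomial γ a =>
      have h1 : (MvPolynomial.monomial γ a : MvPolynomial (Fin (n + 1)) A)
          = a • MvPolynomial.monomial γ 1 := by
        rw [MvPolynomial.smul_monomial, smul_eq_mul, mul_one]
      have h2 : MvPolynomial.map φ (MvPolynomial.monomial γ a)
          = φ a • MvPolynomial.monomial γ (1 : B) := by
        rw [MvPolynomial.map_monomial, MvPolynomial.smul_monomial, smul_eq_mul, mul_one]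
      rw [h2, map_smul, hπB_mon, h1, map_smul]
      simp [MvPolynomial.smul_eq_C_mul]
    | add p q hp hq => simp [map_add, hp, hq]
  -- πB vanishes on the span of the image of the marked ideal
  have hπB_ker : ∀ q ∈ Submodule.span B
      (MvPolynomial.map φ '' ((markedIdeal J F : Set (MvPolynomial (Fin (n + 1)) A)))),
      πB q = 0 := by
    intro q hq
    refine Submodule.span_induction (fun x hx => ?_) (by simp) (fun x y _ _ hx hy => ?_)
      (fun b x _ hx => ?_) hq
    · obtain ⟨g, hg, rfl⟩ := hx
      rw [hcomm, hπA_I g hg, map_zero]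
    · rw [map_add, hx, hy, add_zero]
    · rw [map_smul, hx, smul_zero]
  -- πB is the identity on nSpan B J
  have hπB_N : ∀ q ∈ nSpan B J, πB q = q := by
    intro q hq
    refine Submodule.span_induction (fun x hx => ?_) (by simp) (fun x y _ _ hx hy => ?_)
      (fun b x _ hx => ?_) hq
    · obtain ⟨β, hβ, rfl⟩ := hx
      have hmem : (MvPolynomial.monomial β (1 : A)) ∈ NA :=
        Submodule.subset_span ⟨β, hβ, rfl⟩
      rw [hπB_mon, hπA_N _ hmem, MvPolynomial.map_monomial, map_one]
    · rw [map_add, hx, hy]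
    · rw [map_smul, hx]
  have hIdeq := aux11_markedIdeal_map φ J F
  refine ⟨⟨?_, ?_⟩, hIdeq⟩
  · -- marked set
    intro α hα
    obtain ⟨h1, h2⟩ := hFset α hα
    refine ⟨by rw [MvPolynomial.coeff_map, h1, map_one], ?_⟩
    intro β hβ hβα
    exact h2 β (MvPolynomial.support_map_subset φ (F α) hβ) hβα
  · constructor
    · -- disjointness
      rw [Submodule.disjoint_def]
      intro x hxI hxN
      have h0 : πB x = 0 := hπB_ker x (aux11_mem_span_image φ hxI)
      have h1 : πB x = x := hπB_N x hxN
      rw [h1] at h0; exact h0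
    · -- codisjointness
      rw [codisjoint_iff, eq_top_iff, ← bB.span_eq, Submodule.span_le]
      rintro x hx
      obtain ⟨γ, rfl⟩ := hx
      have hγ : (MvPolynomial.monomial γ (1 : A)) ∈ IA ⊔ NA := by
        rw [hcompl.sup_eq_top]; trivial
      obtain ⟨y, hy, z, hz, hyz⟩ := Submodule.mem_sup.mp hγ
      have hbγ : bB γ = MvPolynomial.monomial γ (1 : B) := by
        rw [hbB, MvPolynomial.coe_basisMonomials]
      have heq : (bB γ : MvPolynomial (Fin (n + 1)) B)
          = MvPolynomial.map φ y + MvPolynomial.map φ z := by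
        rw [hbγ, ← map_add, hyz]
        simp [MvPolynomial.map_monomial]
      rw [SetLike.mem_coe, heq]
      have hy' : MvPolynomial.map φ y
          ∈ Submodule.restrictScalars B (markedIdeal J (fun α => MvPolynomial.map φ (F α))) := by
        rw [Submodule.restrictScalars_mem, hIdeq]
        exact Ideal.mem_map_of_mem _ hy
      have hz' : MvPolynomial.map φ z ∈ nSpan B J := aux11_map_mem_nSpan φ hz
      exact Submodule.add_mem_sup hy' hz'
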